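/- Let 1 \leq K \leq N and M \geq 1 be integers and L \geq 0 a real number. Let W_1,\dots,W_M, Q, and A_\theta^{(i)} (for \theta \in [M], i \in [N]) be random variables; for \Lambda \subseteq [M] write W_\Lambda = (W_j)_{j\in\Lambda}. Assume: (i) H(A_\theta^\Gamma | W_\Lambda, Q) = H(A_{\theta'}^\Gamma | W_\Lambda, Q) for all \theta, \theta' \in [M], all \Lambda \subseteq [M], and all \Gamma \subseteq [N] with |\Gamma| = K; (ii) H(W_\theta | A_\theta^{[N]}, W_\Lambda, Q) = 0 for all \theta \in [M] and all \Lambda \subseteq [M]; (iii) H(W_\theta | W_\Lambda, Q) = L for all \Lambda \subseteq [M] and all \theta \in [M] \setminus \Lambda; (iv) H(A_\theta^{[N]} | W_{[M]}, Q) = 0 for all \theta \in [M]. Then for every \theta \in [M]: H(A_\theta^{[N]} | Q) \geq L \cdot \sum_{i=0}^{M-1} (K/N)^i. -/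

import Mathlib

/-- Shannon entropy (natural logarithm) of a finitely-valued random variable `X`
on a finite probability space with probability mass function `μ`. -/
noncomputable def entropy {Ω V : Type*} [Fintype Ω] [Fintype V] [DecidableEq V]
    (μ : Ω → ℝ) (X : Ω → V) : ℝ :=
  ∑ v : V, Real.negMulLog (∑ ω ∈ Finset.univ.filter (fun ω => X ω = v), μ ω)

/-- Conditional Shannon entropy `H(X | Y) = H(X, Y) - H(Y)`. -/
noncomputable def condEntropy {Ω V U : Type*} [Fintype Ω] [Fintype V] [Fintype U]
    [DecidableEq V] [DecidableEq U] (μ : Ω → ℝ) (X : Ω → V) (Y : Ω → U) : ℝ :=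
  entropy μ (fun ω => (X ω, Y ω)) - entropy μ Y

/-- The joint random variable `(A i)_{i ∈ Γ}` of the subfamily of `(A i)_{i ∈ [N]}`
indexed by the subset `Γ`. -/
def jointOn {Ω V : Type*} {N : ℕ} (Γ : Finset (Fin N)) (A : Fin N → Ω → V) :
    Ω → (Fin N → Option V) :=
  fun ω i => if i ∈ Γ then some (A i ω) else none

open Finset

noncomputable def pmass {Ω V : Type*} [Fintype Ω] [DecidableEq V] (μ : Ω → ℝ) (X : Ω → V)
    (v : V) : ℝ :=
  ∑ ω ∈ Finset.univ.filter (fun ω => X ω = v), μ ω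

set_option linter.unusedSectionVars false

lemma neg_sum_mul {ι : Type*} (s : Finset ι) (a : ι → ℝ) (c : ℝ) :
    -(∑ i ∈ s, a i) * c = ∑ i ∈ s, (-(a i) * c) := by
  rw [neg_mul, Finset.sum_mul, ← Finset.sum_neg_distrib]
  simp [neg_mul]

lemma neg_sum_mul2 {ι κ : Type*} (s : Finset ι) (t : Finset κ) (a : ι → κ → ℝ) (c : ℝ) :
    -(∑ i ∈ s, ∑ j ∈ t, a i j) * c = ∑ i ∈ s, ∑ j ∈ t, (-(a i j) * c) := by
  rw [neg_sum_mul]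
  exact Finset.sum_congr rfl fun i _ => neg_sum_mul _ _ _


lemma point_bound {a b c d : ℝ} (ha : 0 ≤ a) (hb : a ≤ b) (hc : a ≤ c) (hd : a ≤ d) :
    ((-a * Real.log a + -a * Real.log d) - (-a * Real.log b)) - (-a * Real.log c)
      ≤ b * c / d - a := by
  rcases eq_or_lt_of_le ha with h0 | h0
  · rw [← h0]
    simp only [neg_zero, zero_mul, sub_zero, sub_self]
    have : 0 ≤ b * c / d := div_nonneg (mul_nonneg (h0 ▸ hb) (h0 ▸ hc)) (h0 ▸ hd)
    linarith
  · have hb0 : 0 < b := lt_of_lt_of_le h0 hb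
    have hc0 : 0 < c := lt_of_lt_of_le h0 hc
    have hd0 : 0 < d := lt_of_lt_of_le h0 hd
    have hratio : 0 < b * c / (a * d) := by positivity
    have hlog : Real.log (b * c / (a * d)) = Real.log b + Real.log c - Real.log a - Real.log d := by
      rw [Real.log_div (by positivity) (by positivity), Real.log_mul (ne_of_gt hb0) (ne_of_gt hc0),
        Real.log_mul (ne_of_gt h0) (ne_of_gt hd0)]
      ring
    have key : a * Real.log (b * c / (a * d)) ≤ a * (b * c / (a * d) - 1) :=
      mul_le_mul_of_nonneg_left (by linarith [Real.log_le_sub_one_of_pos hratio]) ha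
    have heq : a * (b * c / (a * d) - 1) = b * c / d - a := by
      field_simp
    rw [heq] at key
    rw [hlog] at key
    nlinarith [key]


section aux
variable {Ω V U T : Type*} [Fintype Ω] {μ : Ω → ℝ}

lemma entropy_eq_sum_pmass [Fintype V] [DecidableEq V] (X : Ω → V) :
    entropy μ X = ∑ v, Real.negMulLog (pmass μ X v) := rfl

lemma pmass_nonneg [DecidableEq V] (hμ : ∀ ω, 0 ≤ μ ω) (X : Ω → V) (v : V) :
    0 ≤ pmass μ X v :=
  Finset.sum_nonneg fun ω _ => hμ ω

lemma pmass_comp [Fintype V] [DecidableEq V] [DecidableEq U] (X : Ω → V) (f : V → U) (u : U) :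
    pmass μ (fun ω => f (X ω)) u = ∑ v ∈ univ.filter (fun v => f v = u), pmass μ X v := by
  classical
  have h : ∀ ω ∈ univ.filter (fun ω => f (X ω) = u), X ω ∈ univ.filter (fun v => f v = u) := by
    intro ω hω; simp only [mem_filter, mem_univ, true_and] at hω ⊢; exact hω
  calc pmass μ (fun ω => f (X ω)) u
      = ∑ v ∈ univ.filter (fun v => f v = u),
          ∑ ω ∈ (univ.filter (fun ω => f (X ω) = u)).filter (fun ω => X ω = v), μ ω :=
        (Finset.sum_fiberwise_of_maps_to h μ).symm
    _ = ∑ v ∈ univ.filter (fun v => f v = u), pmass μ X v := by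
        refine Finset.sum_congr rfl fun v hv => ?_
        simp only [mem_filter, mem_univ, true_and] at hv
        unfold pmass
        congr 1
        ext ω
        simp only [mem_filter, mem_univ, true_and, and_iff_right_iff_imp]
        intro h'; rw [h', hv]

lemma negMulLog_sum_le {ι : Type*} (s : Finset ι) (a : ι → ℝ) (ha : ∀ i ∈ s, 0 ≤ a i) :
    Real.negMulLog (∑ i ∈ s, a i) ≤ ∑ i ∈ s, Real.negMulLog (a i) := by
  have key : Real.negMulLog (∑ i ∈ s, a i)
      = ∑ i ∈ s, (-(a i) * Real.log (∑ j ∈ s, a j)) := by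
    rw [Real.negMulLog, neg_sum_mul]
  rw [key]
  refine Finset.sum_le_sum fun i hi => ?_
  rcases eq_or_lt_of_le (ha i hi) with h0 | h0
  · simp [← h0]
  · rw [Real.negMulLog, neg_mul, neg_mul, neg_le_neg_iff]
    refine mul_le_mul_of_nonneg_left ?_ (le_of_lt h0)
    exact Real.log_le_log h0 (Finset.single_le_sum ha hi)

lemma entropy_comp_le [Fintype V] [Fintype U] [DecidableEq V] [DecidableEq U]
    (hμ : ∀ ω, 0 ≤ μ ω) (X : Ω → V) (f : V → U) :
    entropy μ (fun ω => f (X ω)) ≤ entropy μ X := by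
  classical
  rw [entropy_eq_sum_pmass, entropy_eq_sum_pmass]
  calc ∑ u, Real.negMulLog (pmass μ (fun ω => f (X ω)) u)
      ≤ ∑ u, ∑ v ∈ univ.filter (fun v => f v = u), Real.negMulLog (pmass μ X v) := by
        refine Finset.sum_le_sum fun u _ => ?_
        rw [pmass_comp]
        exact negMulLog_sum_le _ _ fun v _ => pmass_nonneg hμ X v
    _ = ∑ v, Real.negMulLog (pmass μ X v) := Finset.sum_fiberwise _ _ _

lemma entropy_eq_of_comp [Fintype V] [Fintype U] [DecidableEq V] [DecidableEq U]
    (hμ : ∀ ω, 0 ≤ μ ω) (X : Ω → V) (X' : Ω → U) (f : V → U) (g : U → V)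
    (h1 : ∀ ω, X' ω = f (X ω)) (h2 : ∀ ω, X ω = g (X' ω)) :
    entropy μ X = entropy μ X' := by
  apply le_antisymm
  · conv_lhs => rw [show X = fun ω => g (X' ω) from funext h2]
    exact entropy_comp_le hμ X' g
  · conv_lhs => rw [show X' = fun ω => f (X ω) from funext h1]
    exact entropy_comp_le hμ X f

end aux

section aux
variable {Ω V U T : Type*} [Fintype Ω] {μ : Ω → ℝ}
variable [Fintype V] [Fintype U] [Fintype T] [DecidableEq V] [DecidableEq U] [DecidableEq T]

lemma condEntropy_nonneg (hμ : ∀ ω, 0 ≤ μ ω) (X : Ω → V) (Y : Ω → U) :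
    0 ≤ condEntropy μ X Y := by
  have h := entropy_comp_le hμ (fun ω => (X ω, Y ω)) Prod.snd
  have h2 : entropy μ (fun ω => Prod.snd (X ω, Y ω)) = entropy μ Y := rfl
  rw [h2] at h
  exact sub_nonneg.mpr h

lemma condEntropy_congr_right (hμ : ∀ ω, 0 ≤ μ ω) (X : Ω → V) (Y : Ω → U) (Y' : Ω → T)
    (f : U → T) (g : T → U) (h1 : ∀ ω, Y' ω = f (Y ω)) (h2 : ∀ ω, Y ω = g (Y' ω)) :
    condEntropy μ X Y = condEntropy μ X Y' := by
  unfold condEntropy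
  rw [entropy_eq_of_comp hμ Y Y' f g h1 h2,
    entropy_eq_of_comp hμ (fun ω => (X ω, Y ω)) (fun ω => (X ω, Y' ω))
      (fun p => (p.1, f p.2)) (fun p => (p.1, g p.2))
      (fun ω => by simp [h1 ω]) (fun ω => by simp [← h2 ω])]

lemma condEntropy_congr_left (hμ : ∀ ω, 0 ≤ μ ω) (X : Ω → V) (X' : Ω → T) (Y : Ω → U)
    (f : V → T) (g : T → V) (h1 : ∀ ω, X' ω = f (X ω)) (h2 : ∀ ω, X ω = g (X' ω)) :
    condEntropy μ X Y = condEntropy μ X' Y := by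
  unfold condEntropy
  rw [entropy_eq_of_comp hμ (fun ω => (X ω, Y ω)) (fun ω => (X' ω, Y ω))
      (fun p => (f p.1, p.2)) (fun p => (g p.1, p.2))
      (fun ω => by simp [h1 ω]) (fun ω => by simp [← h2 ω])]

lemma condEntropy_chain (hμ : ∀ ω, 0 ≤ μ ω) (X : Ω → V) (Z : Ω → U) (Y : Ω → T) :
    condEntropy μ (fun ω => (X ω, Z ω)) Y
      = condEntropy μ Z Y + condEntropy μ X (fun ω => (Z ω, Y ω)) := by
  unfold condEntropy
  have h : entropy μ (fun ω => ((X ω, Z ω), Y ω)) = entropy μ (fun ω => (X ω, (Z ω, Y ω))) :=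
    entropy_eq_of_comp hμ _ _ (fun p => (p.1.1, (p.1.2, p.2))) (fun p => ((p.1, p.2.1), p.2.2))
      (fun ω => rfl) (fun ω => rfl)
  rw [h]
  set a := entropy μ (fun ω => (X ω, (Z ω, Y ω)))
  set b := entropy μ Y
  set c := entropy μ (fun ω => (Z ω, Y ω))
  ring

lemma condEntropy_comp_left_le (hμ : ∀ ω, 0 ≤ μ ω) (X : Ω → V) (X' : Ω → T) (Y : Ω → U)
    (g : V → T) (hg : ∀ ω, X' ω = g (X ω)) :
    condEntropy μ X' Y ≤ condEntropy μ X Y := by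
  unfold condEntropy
  apply sub_le_sub_right
  have h := entropy_comp_le hμ (fun ω => (X ω, Y ω)) (fun p : V × U => (g p.1, p.2))
  have e : (fun ω => ((fun p : V × U => (g p.1, p.2)) (X ω, Y ω))) = (fun ω => (X' ω, Y ω)) :=
    funext fun ω => by simp [hg ω]
  rw [e] at h
  exact h

lemma condEntropy_const (hμ : ∀ ω, 0 ≤ μ ω) (c : V) (Y : Ω → U) :
    condEntropy μ (fun _ => c) Y = 0 := by
  unfold condEntropy
  rw [entropy_eq_of_comp hμ (fun ω => (c, Y ω)) Y Prod.snd (fun y => (c, y))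
    (fun ω => rfl) (fun ω => rfl)]
  exact sub_self _
end aux

lemma main_ineq {α β γ : Type*} [Fintype α] [Fintype β] [Fintype γ]
    (q : α → β → γ → ℝ) (hq : ∀ x z y, 0 ≤ q x z y) :
    ((∑ x, ∑ z, ∑ y, Real.negMulLog (q x z y)) + ∑ y, Real.negMulLog (∑ x, ∑ z, q x z y))
      ≤ (∑ x, ∑ y, Real.negMulLog (∑ z, q x z y))
        + ∑ z, ∑ y, Real.negMulLog (∑ x, q x z y) := by
  classical
  set qY : γ → ℝ := fun y => ∑ x, ∑ z, q x z y with hqY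
  set qXY : α → γ → ℝ := fun x y => ∑ z, q x z y with hqXY
  set qZY : β → γ → ℝ := fun z y => ∑ x, q x z y with hqZY
  -- expansions
  have e2 : (∑ y, Real.negMulLog (qY y))
      = ∑ x, ∑ z, ∑ y, (-(q x z y) * Real.log (qY y)) := by
    have h : ∀ y, Real.negMulLog (qY y) = ∑ x, ∑ z, (-(q x z y) * Real.log (qY y)) := fun y =>
      neg_sum_mul2 _ _ _ _
    rw [Finset.sum_congr rfl fun y _ => h y, Finset.sum_comm]
    exact Finset.sum_congr rfl fun x _ => Finset.sum_comm
  have e3 : (∑ x, ∑ y, Real.negMulLog (qXY x y))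
      = ∑ x, ∑ z, ∑ y, (-(q x z y) * Real.log (qXY x y)) := by
    refine Finset.sum_congr rfl fun x _ => ?_
    have h : ∀ y, Real.negMulLog (qXY x y) = ∑ z, (-(q x z y) * Real.log (qXY x y)) := fun y =>
      neg_sum_mul _ _ _
    rw [Finset.sum_congr rfl fun y _ => h y]
    exact Finset.sum_comm
  have e4 : (∑ z, ∑ y, Real.negMulLog (qZY z y))
      = ∑ x, ∑ z, ∑ y, (-(q x z y) * Real.log (qZY z y)) := by
    have h : ∀ z y, Real.negMulLog (qZY z y) = ∑ x, (-(q x z y) * Real.log (qZY z y)) := fun z y =>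
      neg_sum_mul _ _ _
    calc ∑ z, ∑ y, Real.negMulLog (qZY z y)
        = ∑ z, ∑ y, ∑ x, (-(q x z y) * Real.log (qZY z y)) :=
          Finset.sum_congr rfl fun z _ => Finset.sum_congr rfl fun y _ => h z y
      _ = ∑ z, ∑ x, ∑ y, (-(q x z y) * Real.log (qZY z y)) :=
          Finset.sum_congr rfl fun z _ => Finset.sum_comm
      _ = ∑ x, ∑ z, ∑ y, (-(q x z y) * Real.log (qZY z y)) := Finset.sum_comm
  have e1 : (∑ x, ∑ z, ∑ y, Real.negMulLog (q x z y))
      = ∑ x, ∑ z, ∑ y, (-(q x z y) * Real.log (q x z y)) := by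
    simp only [Real.negMulLog]
  -- pointwise facts
  have hqXYle : ∀ x z y, q x z y ≤ qXY x y := fun x z y =>
    Finset.single_le_sum (fun z _ => hq x z y) (mem_univ z)
  have hqZYle : ∀ x z y, q x z y ≤ qZY z y := fun x z y =>
    Finset.single_le_sum (fun x _ => hq x z y) (mem_univ x)
  have hqYle : ∀ x z y, q x z y ≤ qY y := fun x z y =>
    le_trans (hqXYle x z y)
      (Finset.single_le_sum (fun x _ => Finset.sum_nonneg fun z _ => hq x z y) (mem_univ x))
  have hqY0 : ∀ y, 0 ≤ qY y := fun y =>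
    Finset.sum_nonneg fun x _ => Finset.sum_nonneg fun z _ => hq x z y
  -- counting identity
  have count : ∀ y, (∑ x, ∑ z, qXY x y * qZY z y / qY y) = qY y := by
    intro y
    by_cases h : qY y = 0
    · have hz : ∀ x z, q x z y = 0 := by
        intro x z
        have := hqYle x z y
        have := hq x z y
        linarith [h ▸ this]
      have hXY : ∀ x, qXY x y = 0 := fun x => by
        simp [hqXY, hz]
      simp [hXY, h]
    · have h1 : ∑ x, qXY x y = qY y := rfl
      have h2 : ∑ z, qZY z y = qY y := Finset.sum_comm
      calc ∑ x, ∑ z, qXY x y * qZY z y / qY y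
          = ∑ x, qXY x y * ((∑ z, qZY z y) / qY y) := by
            refine Finset.sum_congr rfl fun x _ => ?_
            rw [← Finset.sum_div, ← Finset.mul_sum, mul_div_assoc]
        _ = (∑ x, qXY x y) * ((∑ z, qZY z y) / qY y) := by rw [Finset.sum_mul]
        _ = qY y * (qY y / qY y) := by rw [h1, h2]
        _ = qY y := by rw [div_self h, mul_one]
  -- final bound
  have bound : (∑ x, ∑ z, ∑ y,
      (((-(q x z y) * Real.log (q x z y) + -(q x z y) * Real.log (qY y))
        - (-(q x z y) * Real.log (qXY x y))) - (-(q x z y) * Real.log (qZY z y))))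
      ≤ ∑ x, ∑ z, ∑ y, (qXY x y * qZY z y / qY y - q x z y) := by
    refine Finset.sum_le_sum fun x _ => Finset.sum_le_sum fun z _ => Finset.sum_le_sum fun y _ => ?_
    exact point_bound (hq x z y) (hqXYle x z y) (hqZYle x z y) (hqYle x z y)
  have zero : (∑ x, ∑ z, ∑ y, (qXY x y * qZY z y / qY y - q x z y)) = 0 := by
    have hsplit : (∑ x, ∑ z, ∑ y, (qXY x y * qZY z y / qY y - q x z y))
        = (∑ x, ∑ z, ∑ y, qXY x y * qZY z y / qY y) - ∑ x, ∑ z, ∑ y, q x z y := by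
      simp [Finset.sum_sub_distrib]
    have hA : (∑ x, ∑ z, ∑ y, qXY x y * qZY z y / qY y) = ∑ y, qY y := by
      calc (∑ x, ∑ z, ∑ y, qXY x y * qZY z y / qY y)
          = ∑ x, ∑ y, ∑ z, qXY x y * qZY z y / qY y :=
            Finset.sum_congr rfl fun x _ => Finset.sum_comm
        _ = ∑ y, ∑ x, ∑ z, qXY x y * qZY z y / qY y := Finset.sum_comm
        _ = ∑ y, qY y := Finset.sum_congr rfl fun y _ => count y
    have hB : (∑ x, ∑ z, ∑ y, q x z y) = ∑ y, qY y := by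
      calc (∑ x, ∑ z, ∑ y, q x z y)
          = ∑ x, ∑ y, ∑ z, q x z y :=
            Finset.sum_congr rfl fun x _ => Finset.sum_comm
        _ = ∑ y, ∑ x, ∑ z, q x z y := Finset.sum_comm
    rw [hsplit, hA, hB, sub_self]
  have hsplit2 : (∑ x, ∑ z, ∑ y,
      (((-(q x z y) * Real.log (q x z y) + -(q x z y) * Real.log (qY y))
        - (-(q x z y) * Real.log (qXY x y))) - (-(q x z y) * Real.log (qZY z y))))
      = ((∑ x, ∑ z, ∑ y, (-(q x z y) * Real.log (q x z y)))
          + ∑ x, ∑ z, ∑ y, (-(q x z y) * Real.log (qY y)))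
        - (∑ x, ∑ z, ∑ y, (-(q x z y) * Real.log (qXY x y)))
        - (∑ x, ∑ z, ∑ y, (-(q x z y) * Real.log (qZY z y))) := by
    simp [Finset.sum_sub_distrib, Finset.sum_add_distrib]
  rw [e1, e2, e3, e4]
  rw [hsplit2, zero] at bound
  linarith

section sub
variable {Ω V U T : Type*} [Fintype Ω] {μ : Ω → ℝ}
variable [Fintype V] [Fintype U] [Fintype T] [DecidableEq V] [DecidableEq U] [DecidableEq T]

lemma condEntropy_cond_pair_le (hμ : ∀ ω, 0 ≤ μ ω) (X : Ω → V) (Z : Ω → U) (Y : Ω → T) :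
    condEntropy μ X (fun ω => (Z ω, Y ω)) ≤ condEntropy μ X Y := by
  classical
  set J : Ω → V × U × T := fun ω => (X ω, Z ω, Y ω) with hJ
  set q : V → U → T → ℝ := fun x z y => pmass μ J (x, z, y) with hq
  have hq0 : ∀ x z y, 0 ≤ q x z y := fun x z y => pmass_nonneg hμ J (x, z, y)
  have E1 : entropy μ J = ∑ x, ∑ z, ∑ y, Real.negMulLog (q x z y) := by
    rw [entropy_eq_sum_pmass]
    rw [Fintype.sum_prod_type]
    exact Finset.sum_congr rfl fun x _ => Fintype.sum_prod_type _
  have hpmY : ∀ y, pmass μ Y y = ∑ x, ∑ z, q x z y := by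
    intro y
    have h := pmass_comp (μ := μ) J (fun p => p.2.2) y
    have h0 : pmass μ (fun ω => (J ω).2.2) y = pmass μ Y y := rfl
    rw [h0] at h
    rw [h, Finset.sum_filter]
    simp only [hq]
    simp [Fintype.sum_prod_type, Prod.ext_iff, ite_and, Finset.sum_ite_eq, Finset.sum_ite_eq']
  have E2 : entropy μ Y = ∑ y, Real.negMulLog (∑ x, ∑ z, q x z y) := by
    rw [entropy_eq_sum_pmass]
    exact Finset.sum_congr rfl fun y _ => by rw [hpmY y]
  have hpmXY : ∀ x y, pmass μ (fun ω => (X ω, Y ω)) (x, y) = ∑ z, q x z y := by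
    intro x y
    have h := pmass_comp (μ := μ) J (fun p => (p.1, p.2.2)) (x, y)
    have h0 : pmass μ (fun ω => ((J ω).1, (J ω).2.2)) (x, y)
        = pmass μ (fun ω => (X ω, Y ω)) (x, y) := rfl
    rw [h0] at h
    rw [h, Finset.sum_filter]
    simp only [hq]
    simp [Fintype.sum_prod_type, Prod.ext_iff, ite_and, Finset.sum_ite_eq, Finset.sum_ite_eq']
  have E3 : entropy μ (fun ω => (X ω, Y ω)) = ∑ x, ∑ y, Real.negMulLog (∑ z, q x z y) := by
    rw [entropy_eq_sum_pmass, Fintype.sum_prod_type]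
    exact Finset.sum_congr rfl fun x _ => Finset.sum_congr rfl fun y _ => by rw [hpmXY x y]
  have hpmZY : ∀ z y, pmass μ (fun ω => (Z ω, Y ω)) (z, y) = ∑ x, q x z y := by
    intro z y
    have h := pmass_comp (μ := μ) J (fun p => p.2) (z, y)
    have h0 : pmass μ (fun ω => (J ω).2) (z, y) = pmass μ (fun ω => (Z ω, Y ω)) (z, y) := rfl
    rw [h0] at h
    rw [h, Finset.sum_filter]
    simp only [hq]
    simp [Fintype.sum_prod_type, Prod.ext_iff, ite_and, Finset.sum_ite_eq, Finset.sum_ite_eq']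
  have E4 : entropy μ (fun ω => (Z ω, Y ω)) = ∑ z, ∑ y, Real.negMulLog (∑ x, q x z y) := by
    rw [entropy_eq_sum_pmass, Fintype.sum_prod_type]
    exact Finset.sum_congr rfl fun z _ => Finset.sum_congr rfl fun y _ => by rw [hpmZY z y]
  have key := main_ineq q hq0
  unfold condEntropy
  have hXZY : entropy μ (fun ω => (X ω, (Z ω, Y ω))) = entropy μ J := rfl
  rw [hXZY, E1, E2, E3, E4] at *
  linarith [key]

lemma condEntropy_le_comp_right (hμ : ∀ ω, 0 ≤ μ ω) (X : Ω → V) (Z : Ω → U) (Z' : Ω → T)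
    (g : U → T) (hg : ∀ ω, Z' ω = g (Z ω)) :
    condEntropy μ X Z ≤ condEntropy μ X Z' := by
  have h1 : condEntropy μ X Z = condEntropy μ X (fun ω => (Z ω, Z' ω)) :=
    condEntropy_congr_right hμ X Z _ (fun u => (u, g u)) Prod.fst
      (fun ω => by rw [hg ω]) (fun ω => rfl)
  rw [h1]
  exact condEntropy_cond_pair_le hμ X Z Z'

end sub

section joint
variable {Ω V U : Type*} [Fintype Ω] {μ : Ω → ℝ} {n : ℕ}
variable [Fintype V] [Fintype U] [DecidableEq V] [DecidableEq U]

lemma jointOn_empty (A : Fin n → Ω → V) (ω : Ω) :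
    jointOn (∅ : Finset (Fin n)) A ω = fun _ => none := by
  funext i; simp [jointOn]

/-- splitting off one coordinate of a joint random variable -/
lemma condEntropy_jointOn_insert [Inhabited V] (hμ : ∀ ω, 0 ≤ μ ω)
    (A : Fin n → Ω → V) {a : Fin n} {s : Finset (Fin n)} (ha : a ∉ s) (Y : Ω → U) :
    condEntropy μ (jointOn (insert a s) A) Y
      = condEntropy μ (fun ω => (A a ω, jointOn s A ω)) Y := by
  refine (condEntropy_congr_left hμ _ _ Y
    (fun h => ((h a).getD default, fun i => if i = a then none else h i))
    (fun p => fun i => if i = a then some p.1 else p.2 i) (fun ω => ?_) (fun ω => ?_)).symm.symm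
  · refine Prod.ext ?_ ?_
    · simp [jointOn]
    · funext i
      by_cases hi : i = a
      · subst hi; simp [jointOn, ha]
      · simp [jointOn, hi, Finset.mem_insert]
  · funext i
    by_cases hi : i = a
    · subst hi; simp [jointOn]
    · simp [jointOn, hi, Finset.mem_insert]

/-- chain rule over a finite index set -/
lemma condEntropy_jointOn_chain [Inhabited V] (hμ : ∀ ω, 0 ≤ μ ω)
    (A : Fin n → Ω → V) (Y : Ω → U) (Γ : Finset (Fin n)) :
    condEntropy μ (jointOn Γ A) Y
      = ∑ i ∈ Γ, condEntropy μ (A i)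
          (fun ω => (jointOn (Γ.filter (fun j => j < i)) A ω, Y ω)) := by
  classical
  induction Γ using Finset.induction_on_max with
  | empty =>
    rw [show jointOn (∅ : Finset (Fin n)) A = fun _ => (fun _ => none : Fin n → Option V) from
      funext fun ω => jointOn_empty A ω]
    simp [condEntropy_const hμ]
  | insert a s hmax ih =>
    have ha : a ∉ s := fun h => lt_irrefl a (hmax a h)
    rw [condEntropy_jointOn_insert hμ A ha Y, condEntropy_chain hμ (A a) (jointOn s A) Y,
      Finset.sum_insert ha, ih]
    have hfila : (insert a s).filter (fun j => j < a) = s := by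
      rw [Finset.filter_insert]
      simp only [lt_irrefl, if_false]
      exact Finset.filter_true_of_mem hmax
    have hfil : ∀ i ∈ s, (insert a s).filter (fun j => j < i) = s.filter (fun j => j < i) := by
      intro i hi
      rw [Finset.filter_insert]
      simp [not_lt_of_gt (hmax i hi)]
    have hterm : ∀ i ∈ s,
        condEntropy μ (A i) (fun ω => (jointOn ((insert a s).filter (fun j => j < i)) A ω, Y ω))
          = condEntropy μ (A i) (fun ω => (jointOn (s.filter (fun j => j < i)) A ω, Y ω)) := by
      intro i hi
      rw [hfil i hi]
    rw [Finset.sum_congr rfl hterm, hfila]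
    ring

lemma count_mem_powersetCard {K : ℕ} (hK : 1 ≤ K) (i : Fin n) :
    ((Finset.powersetCard K (univ : Finset (Fin n))).filter (fun Γ => i ∈ Γ)).card
      = (n - 1).choose (K - 1) := by
  classical
  have hcard : ((univ : Finset (Fin n)).erase i).card = n - 1 := by
    rw [Finset.card_erase_of_mem (mem_univ i), Finset.card_univ, Fintype.card_fin]
  rw [← hcard, ← Finset.card_powersetCard]
  apply Finset.card_bij (fun Γ _ => Γ.erase i)
  · intro Γ hΓ
    simp only [Finset.mem_filter, Finset.mem_powersetCard] at hΓ
    rw [Finset.mem_powersetCard]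
    exact ⟨Finset.erase_subset_erase i hΓ.1.1,
      by rw [Finset.card_erase_of_mem hΓ.2, hΓ.1.2]⟩
  · intro Γ₁ h₁ Γ₂ h₂ heq
    simp only [Finset.mem_filter] at h₁ h₂
    rw [← Finset.insert_erase h₁.2, ← Finset.insert_erase h₂.2, heq]
  · intro Δ hΔ
    rw [Finset.mem_powersetCard] at hΔ
    have hiΔ : i ∉ Δ := fun h => (Finset.mem_erase.mp (hΔ.1 h)).1 rfl
    refine ⟨insert i Δ, ?_, ?_⟩
    · simp only [Finset.mem_filter, Finset.mem_powersetCard]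
      refine ⟨⟨Finset.subset_univ _, ?_⟩, Finset.mem_insert_self i Δ⟩
      rw [Finset.card_insert_of_notMem hiΔ, hΔ.2]
      omega
    · exact Finset.erase_insert hiΔ

lemma shearer [Inhabited V] (hμ : ∀ ω, 0 ≤ μ ω) (A : Fin n → Ω → V) (Y : Ω → U)
    {K : ℕ} (hK : 1 ≤ K) :
    ((n - 1).choose (K - 1) : ℝ) * condEntropy μ (jointOn univ A) Y
      ≤ ∑ Γ ∈ Finset.powersetCard K (univ : Finset (Fin n)),
          condEntropy μ (jointOn Γ A) Y := by
  classical
  set c : Fin n → ℝ := fun i =>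
    condEntropy μ (A i) (fun ω => (jointOn (univ.filter (fun j => j < i)) A ω, Y ω)) with hc
  have hfull : condEntropy μ (jointOn univ A) Y = ∑ i, c i :=
    condEntropy_jointOn_chain hμ A Y univ
  have per : ∀ Γ ∈ Finset.powersetCard K (univ : Finset (Fin n)),
      (∑ i ∈ Γ, c i) ≤ condEntropy μ (jointOn Γ A) Y := by
    intro Γ _
    rw [condEntropy_jointOn_chain hμ A Y Γ]
    refine Finset.sum_le_sum fun i hi => ?_
    refine condEntropy_le_comp_right hμ (A i)
      (fun ω => (jointOn (univ.filter (fun j => j < i)) A ω, Y ω))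
      (fun ω => (jointOn (Γ.filter (fun j => j < i)) A ω, Y ω))
      (fun p => ((fun j => if j ∈ Γ.filter (fun j => j < i) then p.1 j else none), p.2))
      (fun ω => ?_)
    refine Prod.ext ?_ rfl
    funext j
    by_cases hj : j ∈ Γ.filter (fun j => j < i)
    · have hj' : j ∈ univ.filter (fun j => j < i) := by
        simp only [Finset.mem_filter] at hj ⊢
        exact ⟨mem_univ j, hj.2⟩
      simp [jointOn, hj, hj']
    · simp [jointOn, hj]
  have count : (∑ Γ ∈ Finset.powersetCard K (univ : Finset (Fin n)), ∑ i ∈ Γ, c i)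
      = ((n - 1).choose (K - 1) : ℝ) * ∑ i, c i := by
    calc (∑ Γ ∈ Finset.powersetCard K (univ : Finset (Fin n)), ∑ i ∈ Γ, c i)
        = ∑ Γ ∈ Finset.powersetCard K (univ : Finset (Fin n)), ∑ i : Fin n,
            (if i ∈ Γ then c i else 0) := by
          refine Finset.sum_congr rfl fun Γ _ => ?_
          rw [Finset.sum_ite_mem, Finset.univ_inter]
      _ = ∑ i : Fin n, ∑ Γ ∈ Finset.powersetCard K (univ : Finset (Fin n)),
            (if i ∈ Γ then c i else 0) := Finset.sum_comm
      _ = ∑ i : Fin n, ((n - 1).choose (K - 1) : ℝ) * c i := by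
          refine Finset.sum_congr rfl fun i _ => ?_
          rw [← Finset.sum_filter, Finset.sum_const, count_mem_powersetCard hK i,
            nsmul_eq_mul]
      _ = ((n - 1).choose (K - 1) : ℝ) * ∑ i, c i := by rw [Finset.mul_sum]
  rw [hfull, ← count]
  exact Finset.sum_le_sum per

end joint

theorem coded_pir_answer_entropy_lower_bound
    {Ω α γ δ : Type*} [Fintype Ω] [Fintype α] [Fintype γ] [Fintype δ]
    [DecidableEq α] [DecidableEq γ] [DecidableEq δ]
    (N K M : ℕ) (hK : 1 ≤ K) (hKN : K ≤ N) (hM : 1 ≤ M) (L : ℝ) (hL : 0 ≤ L)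
    (μ : Ω → ℝ) (hμ : ∀ ω, 0 ≤ μ ω) (hμ1 : ∑ ω, μ ω = 1)
    (A : Fin M → Fin N → Ω → α) (W : Fin M → Ω → γ) (Q : Ω → δ)
    (hsym : ∀ θ θ' : Fin M, ∀ Λ : Finset (Fin M), ∀ Γ : Finset (Fin N), Γ.card = K →
      condEntropy μ (jointOn Γ (A θ)) (fun ω => (jointOn Λ W ω, Q ω)) =
        condEntropy μ (jointOn Γ (A θ')) (fun ω => (jointOn Λ W ω, Q ω)))
    (hcorr : ∀ θ : Fin M, ∀ Λ : Finset (Fin M),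
      condEntropy μ (W θ)
        (fun ω => (jointOn Finset.univ (A θ) ω, jointOn Λ W ω, Q ω)) = 0)
    (hrec : ∀ Λ : Finset (Fin M), ∀ θ : Fin M, θ ∉ Λ →
      condEntropy μ (W θ) (fun ω => (jointOn Λ W ω, Q ω)) = L)
    (hdet : ∀ θ : Fin M,
      condEntropy μ (jointOn Finset.univ (A θ))
        (fun ω => (jointOn Finset.univ W ω, Q ω)) = 0) :
    ∀ θ : Fin M,
      condEntropy μ (jointOn Finset.univ (A θ)) Q ≥
        L * ∑ i ∈ Finset.range M, ((K : ℝ) / N) ^ i := by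
  classical
  intro θ₀
  have hΩ : Nonempty Ω := by
    by_contra h
    haveI : IsEmpty Ω := not_nonempty_iff.mp h
    simp [Finset.univ_eq_empty] at hμ1
  obtain ⟨ω0⟩ := hΩ
  have hN : 0 < N := lt_of_lt_of_le hK hKN
  haveI : Inhabited γ := ⟨W θ₀ ω0⟩
  haveI : Inhabited α := ⟨A θ₀ ⟨0, hN⟩ ω0⟩
  set r : ℝ := (K : ℝ) / N with hr
  have hr0 : 0 ≤ r := by positivity
  set f : Finset (Fin M) → Fin M → ℝ := fun Λ θ =>
    condEntropy μ (jointOn Finset.univ (A θ)) (fun ω => (jointOn Λ W ω, Q ω)) with hf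
  -- step 1 : f Λ θ = L + f (insert θ Λ) θ  for θ ∉ Λ
  have step1 : ∀ (Λ : Finset (Fin M)) (θ : Fin M), θ ∉ Λ → f Λ θ = L + f (insert θ Λ) θ := by
    intro Λ θ hθ
    set Y : Ω → (Fin M → Option γ) × δ := fun ω => (jointOn Λ W ω, Q ω) with hY
    have chain1 := condEntropy_chain hμ (W θ) (jointOn Finset.univ (A θ)) Y
    have chain2 := condEntropy_chain hμ (jointOn Finset.univ (A θ)) (W θ) Y
    have swap : condEntropy μ (fun ω => (W θ ω, jointOn Finset.univ (A θ) ω)) Y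
        = condEntropy μ (fun ω => (jointOn Finset.univ (A θ) ω, W θ ω)) Y :=
      condEntropy_congr_left hμ _ _ Y Prod.swap Prod.swap (fun ω => rfl) (fun ω => rfl)
    have hc : condEntropy μ (W θ)
        (fun ω => (jointOn Finset.univ (A θ) ω, Y ω)) = 0 := hcorr θ Λ
    have hrc : condEntropy μ (W θ) Y = L := hrec Λ θ hθ
    have hlast : condEntropy μ (jointOn Finset.univ (A θ)) (fun ω => (W θ ω, Y ω))
        = f (insert θ Λ) θ := by
      refine condEntropy_congr_right hμ _ _ _
        (fun p => ((fun i => if i = θ then some p.1 else p.2.1 i), p.2.2))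
        (fun p => ((p.1 θ).getD default, ((fun i => if i = θ then none else p.1 i), p.2)))
        (fun ω => ?_) (fun ω => ?_)
      · refine Prod.ext ?_ rfl
        funext i
        by_cases hi : i = θ
        · subst hi; simp [jointOn]
        · simp [jointOn, hi, Finset.mem_insert, hY]
      · refine Prod.ext ?_ (Prod.ext ?_ rfl)
        · simp [jointOn]
        · funext i
          by_cases hi : i = θ
          · subst hi; simp [jointOn, hθ, hY]
          · simp [jointOn, hi, Finset.mem_insert, hY]
    rw [hc] at chain1
    rw [hrc, hlast] at chain2
    rw [swap] at chain1
    rw [chain2] at chain1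
    simp only [hf]
    linarith [chain1]
  -- step 2 : f Λ θ ≥ r * f Λ θ'
  have step2 : ∀ (Λ : Finset (Fin M)) (θ θ' : Fin M), r * f Λ θ' ≤ f Λ θ := by
    intro Λ θ θ'
    set Y : Ω → (Fin M → Option γ) × δ := fun ω => (jointOn Λ W ω, Q ω) with hY
    set P := Finset.powersetCard K (univ : Finset (Fin N)) with hP
    have h1 : ∀ Γ ∈ P, condEntropy μ (jointOn Γ (A θ)) Y ≤ f Λ θ := by
      intro Γ _
      exact condEntropy_comp_left_le hμ (jointOn Finset.univ (A θ)) (jointOn Γ (A θ)) Y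
        (fun h => fun i => if i ∈ Γ then h i else none)
        (fun ω => by
          funext i
          by_cases hi : i ∈ Γ
          · simp [jointOn, hi]
          · simp [jointOn, hi])
    have hsum1 : (∑ Γ ∈ P, condEntropy μ (jointOn Γ (A θ')) Y)
        = ∑ Γ ∈ P, condEntropy μ (jointOn Γ (A θ)) Y := by
      refine Finset.sum_congr rfl fun Γ hΓ => ?_
      have hcard : Γ.card = K := (Finset.mem_powersetCard.mp hΓ).2
      exact hsym θ' θ Λ Γ hcard
    have hshear := shearer (n := N) hμ (A θ') Y hK
    have hup : (∑ Γ ∈ P, condEntropy μ (jointOn Γ (A θ)) Y) ≤ (P.card : ℝ) * f Λ θ := by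
      rw [← nsmul_eq_mul]
      exact Finset.sum_le_card_nsmul P _ _ h1
    have hPcard : P.card = N.choose K := by
      rw [hP, Finset.card_powersetCard, Finset.card_univ, Fintype.card_fin]
    have hchoose : (N : ℝ) * ((N - 1).choose (K - 1) : ℝ) = (K : ℝ) * (N.choose K : ℝ) := by
      have h := Nat.add_one_mul_choose_eq (N - 1) (K - 1)
      have hN1 : N - 1 + 1 = N := Nat.succ_pred_eq_of_pos hN
      have hK1 : K - 1 + 1 = K := Nat.succ_pred_eq_of_pos hK
      rw [hN1, hK1] at h
      exact_mod_cast h.trans (Nat.mul_comm _ _)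
    -- combine
    have hCpos : (0 : ℝ) < (N.choose K : ℝ) := by
      exact_mod_cast Nat.choose_pos hKN
    have hkey : ((N - 1).choose (K - 1) : ℝ) * f Λ θ' ≤ (N.choose K : ℝ) * f Λ θ := by
      calc ((N - 1).choose (K - 1) : ℝ) * f Λ θ'
          ≤ ∑ Γ ∈ P, condEntropy μ (jointOn Γ (A θ')) Y := hshear
        _ = ∑ Γ ∈ P, condEntropy μ (jointOn Γ (A θ)) Y := hsum1
        _ ≤ (P.card : ℝ) * f Λ θ := hup
        _ = (N.choose K : ℝ) * f Λ θ := by rw [hPcard]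
    have hrq : r = ((N - 1).choose (K - 1) : ℝ) / (N.choose K : ℝ) := by
      rw [hr, div_eq_div_iff (by positivity) (ne_of_gt hCpos)]
      linarith [hchoose]
    rw [hrq, div_mul_eq_mul_div, div_le_iff₀ hCpos]
    linarith [hkey]
  -- nonnegativity
  have fnonneg : ∀ (Λ : Finset (Fin M)) (θ : Fin M), 0 ≤ f Λ θ := fun Λ θ =>
    condEntropy_nonneg hμ _ _
  -- main induction
  have main : ∀ (m : ℕ) (Λ : Finset (Fin M)) (θ : Fin M), θ ∉ Λ → Λᶜ.card = m →
      L * ∑ i ∈ Finset.range m, r ^ i ≤ f Λ θ := by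
    intro m
    induction m with
    | zero =>
      intro Λ θ hθ hcard
      exact absurd (Finset.mem_compl.mpr hθ) (by simp [Finset.card_eq_zero.mp hcard])
    | succ m ih =>
      intro Λ θ hθ hcard
      have e1 : f Λ θ = L + f (insert θ Λ) θ := step1 Λ θ hθ
      have hcard' : (insert θ Λ)ᶜ.card = m := by
        rw [Finset.compl_insert, Finset.card_erase_of_mem (Finset.mem_compl.mpr hθ), hcard]
        omega
      have h2 : r * (L * ∑ i ∈ Finset.range m, r ^ i) ≤ f (insert θ Λ) θ := by
        rcases Nat.eq_zero_or_pos m with hm | hm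
        · subst hm
          simp only [Finset.range_zero, Finset.sum_empty, mul_zero]
          exact fnonneg _ _
        · have hne : ((insert θ Λ)ᶜ).Nonempty := Finset.card_pos.mp (by rw [hcard']; exact hm)
          obtain ⟨θ', hθ'⟩ := hne
          have hθ'' : θ' ∉ insert θ Λ := Finset.mem_compl.mp hθ'
          have hih := ih (insert θ Λ) θ' hθ'' hcard'
          calc r * (L * ∑ i ∈ Finset.range m, r ^ i)
              ≤ r * f (insert θ Λ) θ' := mul_le_mul_of_nonneg_left hih hr0
            _ ≤ f (insert θ Λ) θ := step2 (insert θ Λ) θ θ'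
      calc L * ∑ i ∈ Finset.range (m + 1), r ^ i
          = L + r * (L * ∑ i ∈ Finset.range m, r ^ i) := by
            rw [geom_sum_succ]; ring
        _ ≤ L + f (insert θ Λ) θ := by linarith
        _ = f Λ θ := e1.symm
  -- conclusion
  have hstart : condEntropy μ (jointOn Finset.univ (A θ₀)) Q = f ∅ θ₀ := by
    refine condEntropy_congr_right hμ _ Q _
      (fun qv => ((fun _ => none : Fin M → Option γ), qv)) Prod.snd
      (fun ω => ?_) (fun ω => rfl)
    refine Prod.ext ?_ rfl
    funext i
    simp [jointOn]
  have hcompl : (∅ : Finset (Fin M))ᶜ.card = M := by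
    simp
  have := main M ∅ θ₀ (Finset.notMem_empty θ₀) hcompl
  rw [hstart]
  exact this
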